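/- Let G be a graph with no degree-choosable component of radius at most r, let v be a vertex, and let u, u' be distinct vertices at distance t ≤ r−1 from v (level t of the BFS tree). Then u and u' cannot have a common neighbor w at distance t+1 from v; equivalently, each vertex at level t+1 has exactly one neighbor at level t. -/

import Mathlib

open SimpleGraph

def IsOddCycle {V : Type*} (G : SimpleGraph V) : Prop :=
  G.Connected ∧ (∀ v, (G.neighborSet v).ncard = 2) ∧ Odd (Nat.card V)

def TwoConnected {V : Type*} (G : SimpleGraph V) : Prop :=
  3 ≤ Nat.card V ∧ ∀ v : V, (G.induce {w : V | w ≠ v}).Connected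

def DegreeChoosable {V : Type*} (G : SimpleGraph V) : Prop :=
  ∀ L : V → Finset ℕ, (∀ v, (G.neighborSet v).ncard ≤ (L v).card) →
    ∃ c : V → ℕ, (∀ v, c v ∈ L v) ∧ ∀ u w, G.Adj u w → c u ≠ c w

def IsDCC {V : Type*} (G : SimpleGraph V) (S : Set V) : Prop :=
  TwoConnected (G.induce S) ∧ G.induce S ≠ ⊤ ∧ ¬ IsOddCycle (G.induce S)

def RadiusLE {V : Type*} (G : SimpleGraph V) (S : Set V) (r : ℕ) : Prop :=
  ∃ u : S, ∀ w : S, (G.induce S).dist u w ≤ r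

def NoSmallDCC {V : Type*} (G : SimpleGraph V) (r : ℕ) : Prop :=
  ∀ S : Set V, IsDCC G S → ¬ RadiusLE G S r

def gball {V : Type*} (G : SimpleGraph V) (v : V) (r : ℕ) : Set V :=
  {u | G.Reachable v u ∧ G.dist v u ≤ r}

noncomputable def childCount {V : Type*} (G : SimpleGraph V) (v u : V) : ℕ :=
  {w | G.Adj u w ∧ G.dist v w = G.dist v u + 1}.ncard




open SimpleGraph

namespace ForStmt11

variable {V : Type*}

lemma exists_induce_walk (G : SimpleGraph V) (T : Set V) :
    ∀ {x y : V} (p : G.Walk x y) (hp : ∀ b ∈ p.support, b ∈ T),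
      ∃ q : (G.induce T).Walk ⟨x, hp x p.start_mem_support⟩ ⟨y, hp y p.end_mem_support⟩,
        q.length = p.length ∧ ∀ b ∈ q.support, (b : V) ∈ p.support := by
  intro x y p
  induction p with
  | nil =>
    intro hp
    refine ⟨Walk.nil, rfl, ?_⟩
    intro b hb
    simp only [Walk.support_nil, List.mem_singleton] at hb ⊢
    rw [hb]
  | @cons x m y h p ih =>
    intro hp
    have hm : m ∈ T := hp m (by simp)
    obtain ⟨q, hql, hqs⟩ := ih (fun b hb => hp b (by simp [hb]))
    refine ⟨Walk.cons (by simpa using h) q, by simp [hql], ?_⟩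
    intro b hb
    rw [Walk.support_cons, List.mem_cons] at hb
    rcases hb with hb | hb
    · rw [hb]; simp
    · simp only [Walk.support_cons, List.mem_cons]
      exact Or.inr (hqs b hb)

lemma induce_dist_le (G : SimpleGraph V) (T : Set V) {x y : V} (p : G.Walk x y)
    (hp : ∀ b ∈ p.support, b ∈ T) (hx : x ∈ T) (hy : y ∈ T) :
    (G.induce T).dist ⟨x, hx⟩ ⟨y, hy⟩ ≤ p.length := by
  obtain ⟨q, hql, -⟩ := exists_induce_walk G T p hp
  exact hql ▸ dist_le q

lemma reach_double (G : SimpleGraph V) (S : Set V) (a : ↥S) {x y : V} (p : G.Walk x y)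
    (hS : ∀ b ∈ p.support, b ∈ S) (ha : (a : V) ∉ p.support)
    (hx : x ∈ S) (hy : y ∈ S) (hxa : (⟨x, hx⟩ : ↥S) ≠ a) (hya : (⟨y, hy⟩ : ↥S) ≠ a) :
    ((G.induce S).induce {b : ↥S | b ≠ a}).Reachable ⟨⟨x, hx⟩, hxa⟩ ⟨⟨y, hy⟩, hya⟩ := by
  obtain ⟨q, -, hqs⟩ := exists_induce_walk G S p hS
  obtain ⟨q2, -, -⟩ := exists_induce_walk (G.induce S) {b : ↥S | b ≠ a} q
    (fun b hb hba => ha (by rw [← hba]; exact hqs b hb))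
  exact ⟨q2⟩

lemma not_mem_drop [DecidableEq V] (G : SimpleGraph V) {z u : V} (Q : G.Walk z u) (hnd : Q.support.Nodup)
    {x a : V} (hx : x ∈ Q.support) (hat : a ∈ (Q.takeUntil x hx).support) (hax : a ≠ x) :
    a ∉ (Q.dropUntil x hx).support := by
  intro had
  have hQs : Q.support = (Q.takeUntil x hx).support ++ (Q.dropUntil x hx).support.tail := by
    rw [← Walk.support_append, Walk.take_spec]
  rw [hQs, List.nodup_append] at hnd
  have : a ∈ (Q.dropUntil x hx).support.tail := by
    have := (Q.dropUntil x hx).support_eq_cons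
    rw [this, List.mem_cons] at had
    rcases had with h | h
    · exact absurd h hax
    · exact h
  exact hnd.2.2 a hat a this rfl

lemma dist_on [DecidableEq V] (G : SimpleGraph V) {v z u x : V} (Q : G.Walk z u) (hx : x ∈ Q.support)
    (hvz : G.Reachable v z) (hQ : G.dist v z + Q.length ≤ G.dist v u) :
    G.dist v x = G.dist v z + (Q.takeUntil x hx).length := by
  obtain ⟨pz, hpz⟩ := hvz.exists_walk_length_eq_dist
  have hup : G.dist v x ≤ G.dist v z + (Q.takeUntil x hx).length := by
    have := dist_le (pz.append (Q.takeUntil x hx))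
    rwa [Walk.length_append, hpz] at this
  have hvx : G.Reachable v x := hvz.trans ⟨Q.takeUntil x hx⟩
  obtain ⟨px, hpx⟩ := hvx.exists_walk_length_eq_dist
  have hlow : G.dist v u ≤ G.dist v x + (Q.dropUntil x hx).length := by
    have := dist_le (px.append (Q.dropUntil x hx))
    rwa [Walk.length_append, hpx] at this
  have hsum : (Q.takeUntil x hx).length + (Q.dropUntil x hx).length = Q.length := by
    have := congrArg Walk.length (Q.take_spec hx)
    rwa [Walk.length_append] at this
  omega

lemma connected_del [DecidableEq V] (G : SimpleGraph V) {z u u' w : V}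
    (Q : G.Walk z u) (Q' : G.Walk z u')
    (hQnd : Q.support.Nodup) (hQ'nd : Q'.support.Nodup)
    (h1 : G.Adj u w) (h2 : G.Adj u' w)
    (hint : ∀ x, x ∈ Q.support → x ∈ Q'.support → x = z)
    (hwQ : w ∉ Q.support) (hwQ' : w ∉ Q'.support)
    (S : Set V) (hmem : ∀ x, x ∈ S ↔ (x ∈ Q.support ∨ x ∈ Q'.support ∨ x = w))
    (a : ↥S) (haQ : (a : V) ∈ Q.support ∨ (a : V) = w) :
    ((G.induce S).induce {b : ↥S | b ≠ a}).Connected := by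
  have hzS : z ∈ S := (hmem z).mpr (Or.inl Q.start_mem_support)
  have hwS : w ∈ S := (hmem w).mpr (Or.inr (Or.inr rfl))
  have hzw : z ≠ w := fun hzw => hwQ (hzw ▸ Q.start_mem_support)
  rw [connected_iff]
  suffices hhub : ∃ hub : ↥{b : ↥S | b ≠ a},
      ∀ x : ↥{b : ↥S | b ≠ a}, ((G.induce S).induce {b : ↥S | b ≠ a}).Reachable x hub by
    obtain ⟨hub, hh⟩ := hhub
    exact ⟨fun x y => (hh x).trans (hh y).symm, ⟨hub⟩⟩
  rcases haQ with haQ | haw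
  swap
  · -- a = w ; hub = z
    have hza : (⟨z, hzS⟩ : ↥S) ≠ a := fun hc => hzw (by rw [← haw]; exact congrArg Subtype.val hc)
    refine ⟨⟨⟨z, hzS⟩, hza⟩, ?_⟩
    rintro ⟨⟨x, hxS⟩, hxa⟩
    rcases (hmem x).mp hxS with hxQ | hxQ' | rfl
    · refine reach_double G S a (Q.takeUntil x hxQ).reverse ?_ ?_ hxS hzS hxa hza
      · intro b hb
        rw [Walk.support_reverse, List.mem_reverse] at hb
        exact (hmem b).mpr (Or.inl (Walk.support_takeUntil_subset _ _ hb))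
      · rw [Walk.support_reverse, List.mem_reverse, haw]
        exact fun hb => hwQ (Walk.support_takeUntil_subset _ _ hb)
    · refine reach_double G S a (Q'.takeUntil x hxQ').reverse ?_ ?_ hxS hzS hxa hza
      · intro b hb
        rw [Walk.support_reverse, List.mem_reverse] at hb
        exact (hmem b).mpr (Or.inr (Or.inl (Walk.support_takeUntil_subset _ _ hb)))
      · rw [Walk.support_reverse, List.mem_reverse, haw]
        exact fun hb => hwQ' (Walk.support_takeUntil_subset _ _ hb)
    · exact absurd (Subtype.ext haw.symm) hxa
  · by_cases haz : (a : V) = z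
    · -- a = z ; hub = w
      have hwa : (⟨w, hwS⟩ : ↥S) ≠ a :=
        fun hc => hzw (by rw [← haz]; exact (congrArg Subtype.val hc).symm)
      refine ⟨⟨⟨w, hwS⟩, hwa⟩, ?_⟩
      rintro ⟨⟨x, hxS⟩, hxa⟩
      have hxz : x ≠ z := fun hc => hxa (Subtype.ext (hc.trans haz.symm))
      rcases (hmem x).mp hxS with hxQ | hxQ' | rfl
      · refine reach_double G S a ((Q.dropUntil x hxQ).append h1.toWalk) ?_ ?_ hxS hwS hxa hwa
        · intro b hb
          rw [Walk.support_append] at hb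
          rcases List.mem_append.mp hb with hb | hb
          · exact (hmem b).mpr (Or.inl (Walk.support_dropUntil_subset _ _ hb))
          · simp only [Adj.toWalk, Walk.support_cons, Walk.support_nil, List.tail_cons,
              List.mem_singleton] at hb
            exact (hmem b).mpr (Or.inr (Or.inr hb))
        · rw [Walk.support_append, haz]
          intro hb
          rcases List.mem_append.mp hb with hb | hb
          · exact not_mem_drop G Q hQnd hxQ (Q.takeUntil x hxQ).start_mem_support
              (Ne.symm hxz) hb
          · simp only [Adj.toWalk, Walk.support_cons, Walk.support_nil, List.tail_cons,
              List.mem_singleton] at hb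
            exact hzw hb
      · refine reach_double G S a ((Q'.dropUntil x hxQ').append h2.toWalk) ?_ ?_ hxS hwS hxa hwa
        · intro b hb
          rw [Walk.support_append] at hb
          rcases List.mem_append.mp hb with hb | hb
          · exact (hmem b).mpr (Or.inr (Or.inl (Walk.support_dropUntil_subset _ _ hb)))
          · simp only [Adj.toWalk, Walk.support_cons, Walk.support_nil, List.tail_cons,
              List.mem_singleton] at hb
            exact (hmem b).mpr (Or.inr (Or.inr hb))
        · rw [Walk.support_append, haz]
          intro hb
          rcases List.mem_append.mp hb with hb | hb
          · exact not_mem_drop G Q' hQ'nd hxQ' (Q'.takeUntil x hxQ').start_mem_support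
              (Ne.symm hxz) hb
          · simp only [Adj.toWalk, Walk.support_cons, Walk.support_nil, List.tail_cons,
              List.mem_singleton] at hb
            exact hzw hb
      · exact Reachable.refl _
    · -- a ∈ Q.support, a ≠ z ; hub = z
      have haw : (a : V) ≠ w := fun hc => hwQ (hc ▸ haQ)
      have haQ' : (a : V) ∉ Q'.support := fun hc => haz (hint _ haQ hc)
      have hza : (⟨z, hzS⟩ : ↥S) ≠ a := fun hc => haz (congrArg Subtype.val hc).symm
      refine ⟨⟨⟨z, hzS⟩, hza⟩, ?_⟩
      rintro ⟨⟨x, hxS⟩, hxa⟩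
      rcases (hmem x).mp hxS with hxQ | hxQ' | rfl
      · have hax : (a : V) ≠ x := fun hc => hxa (Subtype.ext hc.symm)
        by_cases hat : (a : V) ∈ (Q.takeUntil x hxQ).support
        · -- go forward: x → u → w → u' → z
          refine reach_double G S a
            ((Q.dropUntil x hxQ).append (Walk.cons h1 (Walk.cons h2.symm Q'.reverse)))
            ?_ ?_ hxS hzS hxa hza
          · intro b hb
            rw [Walk.support_append] at hb
            rcases List.mem_append.mp hb with hb | hb
            · exact (hmem b).mpr (Or.inl (Walk.support_dropUntil_subset _ _ hb))
            · simp only [Walk.support_cons, List.tail_cons, List.mem_cons,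
                Walk.support_reverse, List.mem_reverse] at hb
              rcases hb with hb | hb
              · exact (hmem b).mpr (Or.inr (Or.inr hb))
              · exact (hmem b).mpr (Or.inr (Or.inl hb))
          · rw [Walk.support_append]
            intro hb
            rcases List.mem_append.mp hb with hb | hb
            · exact not_mem_drop G Q hQnd hxQ hat hax hb
            · simp only [Walk.support_cons, List.tail_cons, List.mem_cons,
                Walk.support_reverse, List.mem_reverse] at hb
              rcases hb with hb | hb
              · exact haw hb
              · exact haQ' hb
        · refine reach_double G S a (Q.takeUntil x hxQ).reverse ?_ ?_ hxS hzS hxa hza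
          · intro b hb
            rw [Walk.support_reverse, List.mem_reverse] at hb
            exact (hmem b).mpr (Or.inl (Walk.support_takeUntil_subset _ _ hb))
          · rw [Walk.support_reverse, List.mem_reverse]; exact hat
      · refine reach_double G S a (Q'.takeUntil x hxQ').reverse ?_ ?_ hxS hzS hxa hza
        · intro b hb
          rw [Walk.support_reverse, List.mem_reverse] at hb
          exact (hmem b).mpr (Or.inr (Or.inl (Walk.support_takeUntil_subset _ _ hb)))
        · rw [Walk.support_reverse, List.mem_reverse]
          exact fun hb => haQ' (Walk.support_takeUntil_subset _ _ hb)
      · -- x = w : walk w → u' → z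
        refine reach_double G S a (Walk.cons h2.symm Q'.reverse) ?_ ?_ hxS hzS hxa hza
        · intro b hb
          simp only [Walk.support_cons, List.mem_cons, Walk.support_reverse,
            List.mem_reverse] at hb
          rcases hb with hb | hb
          · exact (hmem b).mpr (Or.inr (Or.inr hb))
          · exact (hmem b).mpr (Or.inr (Or.inl hb))
        · simp only [Walk.support_cons, List.mem_cons, Walk.support_reverse,
            List.mem_reverse]
          rintro (hb | hb)
          · exact haw hb
          · exact haQ' hb

end ForStmt11

/-- Two distinct vertices at the same BFS level t ≤ r-1 cannot share a common
neighbor at level t+1 when there is no DCC of radius at most r. -/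
theorem stmt11 {V : Type*} [Fintype V] (G : SimpleGraph V) (r : ℕ)
    (h : NoSmallDCC G r) (v u u' w : V) (t : ℕ) (htr : t + 1 ≤ r)
    (hu : G.dist v u = t) (hu' : G.dist v u' = t) (hne : u ≠ u')
    (hw : G.dist v w = t + 1) (h1 : G.Adj u w) (h2 : G.Adj u' w) :
    False := by
  classical
  have hrw : G.Reachable v w := Reachable.of_dist_ne_zero (by rw [hw]; omega)
  have hru : G.Reachable v u := hrw.trans h1.symm.reachable
  have hru' : G.Reachable v u' := hrw.trans h2.symm.reachable
  obtain ⟨p, hp⟩ := hru.exists_walk_length_eq_dist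
  obtain ⟨p', hp'⟩ := hru'.exists_walk_length_eq_dist
  rw [hu] at hp; rw [hu'] at hp'
  -- choose z : a deepest common vertex of p and p'
  set F0 : Finset V := p.support.toFinset ∩ p'.support.toFinset with hF0
  have hvF0 : v ∈ F0 := by
    simp only [hF0, Finset.mem_inter, List.mem_toFinset]
    exact ⟨p.start_mem_support, p'.start_mem_support⟩
  obtain ⟨z, hzF0, hzmax⟩ := F0.exists_max_image (G.dist v) ⟨v, hvF0⟩
  rw [hF0, Finset.mem_inter, List.mem_toFinset, List.mem_toFinset] at hzF0
  obtain ⟨hzp, hzp'⟩ := hzF0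
  set s := G.dist v z with hs
  have hrz : G.Reachable v z := ⟨p.takeUntil z hzp⟩
  set Q : G.Walk z u := (p.dropUntil z hzp).bypass with hQdef
  set Q' : G.Walk z u' := (p'.dropUntil z hzp').bypass with hQ'def
  have hQpath : Q.IsPath := Walk.bypass_isPath _
  have hQ'path : Q'.IsPath := Walk.bypass_isPath _
  have hQsub : Q.support ⊆ p.support :=
    fun y hy => Walk.support_dropUntil_subset _ _ (Walk.support_bypass_subset _ hy)
  have hQ'sub : Q'.support ⊆ p'.support :=
    fun y hy => Walk.support_dropUntil_subset _ _ (Walk.support_bypass_subset _ hy)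
  have hsQle : s + Q.length ≤ t := by
    have ha : s ≤ (p.takeUntil z hzp).length := dist_le _
    have hb : Q.length ≤ (p.dropUntil z hzp).length := Walk.length_bypass_le _
    have hc : (p.takeUntil z hzp).length + (p.dropUntil z hzp).length = t := by
      have := congrArg Walk.length (p.take_spec hzp)
      rwa [Walk.length_append, hp] at this
    omega
  have hsQ'le : s + Q'.length ≤ t := by
    have ha : s ≤ (p'.takeUntil z hzp').length := dist_le _
    have hb : Q'.length ≤ (p'.dropUntil z hzp').length := Walk.length_bypass_le _
    have hc : (p'.takeUntil z hzp').length + (p'.dropUntil z hzp').length = t := by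
      have := congrArg Walk.length (p'.take_spec hzp')
      rwa [Walk.length_append, hp'] at this
    omega
  obtain ⟨pz, hpz⟩ := hrz.exists_walk_length_eq_dist
  have hQeq : s + Q.length = t := by
    refine le_antisymm hsQle ?_
    have := dist_le (pz.append Q)
    rwa [Walk.length_append, hpz, hu, ← hs] at this
  have hQ'eq : s + Q'.length = t := by
    refine le_antisymm hsQ'le ?_
    have := dist_le (pz.append Q')
    rwa [Walk.length_append, hpz, hu', ← hs] at this
  have hdQ : ∀ x (hx : x ∈ Q.support), G.dist v x = s + (Q.takeUntil x hx).length :=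
    fun x hx => ForStmt11.dist_on G Q hx hrz (by rw [hu, ← hs]; omega)
  have hdQ' : ∀ x (hx : x ∈ Q'.support), G.dist v x = s + (Q'.takeUntil x hx).length :=
    fun x hx => ForStmt11.dist_on G Q' hx hrz (by rw [hu', ← hs]; omega)
  have hwQ : w ∉ Q.support := by
    intro hx
    have hd := hdQ w hx
    have hl := Walk.length_takeUntil_le Q hx
    omega
  have hwQ' : w ∉ Q'.support := by
    intro hx
    have hd := hdQ' w hx
    have hl := Walk.length_takeUntil_le Q' hx
    omega
  have hint : ∀ x, x ∈ Q.support → x ∈ Q'.support → x = z := by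
    intro x hxQ hxQ'
    have hxF : x ∈ F0 := by
      rw [hF0, Finset.mem_inter, List.mem_toFinset, List.mem_toFinset]
      exact ⟨hQsub hxQ, hQ'sub hxQ'⟩
    have hmax := hzmax x hxF
    have hd := hdQ x hxQ
    have : (Q.takeUntil x hxQ).length = 0 := by omega
    exact (Walk.eq_of_length_eq_zero this).symm
  have hint' : ∀ x, x ∈ Q'.support → x ∈ Q.support → x = z := fun x hb ha => hint x ha hb
  have hst : s + 1 ≤ t := by
    by_contra hc
    have hQ0 : Q.length = 0 := by omega
    have hQ'0 : Q'.length = 0 := by omega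
    exact hne ((Walk.eq_of_length_eq_zero hQ0).symm.trans (Walk.eq_of_length_eq_zero hQ'0))
  -- the vertex set
  set A : Finset V := Q.support.toFinset with hA
  set B : Finset V := Q'.support.toFinset with hB
  set F : Finset V := A ∪ B ∪ {w} with hF
  set S : Set V := ↑F with hSdef
  have hmem : ∀ x, x ∈ S ↔ (x ∈ Q.support ∨ x ∈ Q'.support ∨ x = w) := by
    intro x
    simp only [hSdef, hF, hA, hB, Finset.coe_union, Set.mem_union, Finset.mem_coe,
      List.mem_toFinset, Finset.coe_singleton, Set.mem_singleton_iff]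
    tauto
  have hmem' : ∀ x, x ∈ S ↔ (x ∈ Q'.support ∨ x ∈ Q.support ∨ x = w) := by
    intro x; rw [hmem x]; tauto
  have hzS : z ∈ S := (hmem z).mpr (Or.inl Q.start_mem_support)
  have hwS : w ∈ S := (hmem w).mpr (Or.inr (Or.inr rfl))
  have hzw : z ≠ w := fun hzw => hwQ (hzw ▸ Q.start_mem_support)
  -- cardinality
  have hAcard : A.card = Q.length + 1 := by
    rw [hA, List.toFinset_card_of_nodup hQpath.support_nodup, Walk.length_support]
  have hBcard : B.card = Q'.length + 1 := by
    rw [hB, List.toFinset_card_of_nodup hQ'path.support_nodup, Walk.length_support]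
  have hAB : A ∩ B = {z} := by
    ext x
    simp only [hA, hB, Finset.mem_inter, List.mem_toFinset, Finset.mem_singleton]
    constructor
    · rintro ⟨ha, hb⟩; exact hint x ha hb
    · rintro rfl; exact ⟨Q.start_mem_support, Q'.start_mem_support⟩
  have hcardAB : (A ∪ B).card = Q.length + Q'.length + 1 := by
    have hiu := Finset.card_inter_add_card_union A B
    rw [hAB, Finset.card_singleton] at hiu
    omega
  have hwAB : w ∉ A ∪ B := by
    simp only [hA, hB, Finset.mem_union, List.mem_toFinset]
    rintro (hb | hb)
    · exact hwQ hb
    · exact hwQ' hb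
  have hFcard : F.card = Q.length + Q'.length + 2 := by
    rw [hF, Finset.card_union_of_disjoint (by simpa [Finset.disjoint_singleton_right] using hwAB)]
    rw [hcardAB, Finset.card_singleton]
  have hcardS : Nat.card ↥S = Q.length + Q'.length + 2 := by
    rw [hSdef, Nat.card_coe_set_eq, Set.ncard_coe_finset, hFcard]
  refine h S ?_ ?_
  · unfold IsDCC TwoConnected
    refine ⟨⟨?_, ?_⟩, ?_, ?_⟩
    · -- 3 ≤ Nat.card
      rw [hcardS]; omega
    · -- connectivity after removing any vertex
      intro a
      rcases (hmem a).mp a.prop with haQ | haQ' | haw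
      · exact ForStmt11.connected_del G Q Q' hQpath.support_nodup hQ'path.support_nodup h1 h2
          hint hwQ hwQ' S hmem a (Or.inl haQ)
      · exact ForStmt11.connected_del G Q' Q hQ'path.support_nodup hQpath.support_nodup h2 h1
          hint' hwQ' hwQ S hmem' a (Or.inl haQ')
      · exact ForStmt11.connected_del G Q Q' hQpath.support_nodup hQ'path.support_nodup h1 h2
          hint hwQ hwQ' S hmem a (Or.inr haw)
    · -- not complete
      intro htop
      have hadj : (G.induce S).Adj ⟨z, hzS⟩ ⟨w, hwS⟩ := by
        rw [htop]
        simp only [top_adj, ne_eq, Subtype.mk.injEq]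
        exact hzw
      have hGzw : G.Adj z w := by simpa using hadj
      have hdw : G.dist v w ≤ s + 1 := by
        have := dist_le (pz.append hGzw.toWalk)
        rwa [Walk.length_append, hpz, ← hs] at this
      rw [hw] at hdw
      omega
    · -- not an odd cycle
      unfold IsOddCycle
      rintro ⟨-, -, hodd⟩
      rw [hcardS, Nat.odd_iff] at hodd
      omega
  · -- radius ≤ r from z
    unfold RadiusLE
    refine ⟨⟨z, hzS⟩, ?_⟩
    rintro ⟨x, hxS⟩
    rcases (hmem x).mp hxS with hxQ | hxQ' | rfl
    · have hsup : ∀ b ∈ (Q.takeUntil x hxQ).support, b ∈ S := fun b hb =>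
        (hmem b).mpr (Or.inl (Walk.support_takeUntil_subset _ _ hb))
      have hd := ForStmt11.induce_dist_le G S (Q.takeUntil x hxQ) hsup hzS hxS
      have hl := Walk.length_takeUntil_le Q hxQ
      omega
    · have hsup : ∀ b ∈ (Q'.takeUntil x hxQ').support, b ∈ S := fun b hb =>
        (hmem b).mpr (Or.inr (Or.inl (Walk.support_takeUntil_subset _ _ hb)))
      have hd := ForStmt11.induce_dist_le G S (Q'.takeUntil x hxQ') hsup hzS hxS
      have hl := Walk.length_takeUntil_le Q' hxQ'
      omega
    · have hsup : ∀ b ∈ (Q.append h1.toWalk).support, b ∈ S := by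
        intro b hb
        rw [Walk.support_append] at hb
        rcases List.mem_append.mp hb with hb | hb
        · exact (hmem b).mpr (Or.inl hb)
        · simp only [Adj.toWalk, Walk.support_cons, Walk.support_nil, List.tail_cons,
            List.mem_singleton] at hb
          exact (hmem b).mpr (Or.inr (Or.inr hb))
      have hd := ForStmt11.induce_dist_le G S (Q.append h1.toWalk) hsup hzS hxS
      rw [Walk.length_append] at hd
      have hlen : h1.toWalk.length = 1 := rfl
      omega
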